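/- Let G be an abelian p-group, and K, L subgroups of G with K ∩ L = 0 such that every homomorphism from K ⊕ L into G that maps K ⊕ L into itself extends to an endomorphism of G (i.e., K ⊕ L ∈ W(G)). Then K ⊕ L is a valuated direct sum: for all k ∈ K and ℓ ∈ L, h(k + ℓ) = min(h(k), h(ℓ)), where h is the p-height in G. -/

import Mathlib

open AddSubgroup

/-- The `p`-height of an element, as an extended natural number. -/
noncomputable def pHeight (p : ℕ) {G : Type*} [AddCommGroup G] (x : G) : ℕ∞ :=
  sSup {n : ℕ∞ | ∃ m : ℕ, n = (m : ℕ∞) ∧ ∃ y : G, p ^ m • y = x}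

/-- `G` is an abelian `p`-group. -/
def IsPGrp (p : ℕ) (G : Type*) [AddCommGroup G] : Prop :=
  ∀ x : G, ∃ n : ℕ, p ^ n • x = 0

/-- `H ∈ Q(G)`: every homomorphism `H → G` extends to an endomorphism of `G`. -/
def InQ {G : Type*} [AddCommGroup G] (H : AddSubgroup G) : Prop :=
  ∀ f : H →+ G, ∃ g : G →+ G, ∀ x : H, g x = f x

/-- `H ∈ P(G)`: every monomorphism `H → G` extends to an endomorphism of `G`. -/
def InP {G : Type*} [AddCommGroup G] (H : AddSubgroup G) : Prop :=
  ∀ f : H →+ G, Function.Injective f → ∃ g : G →+ G, ∀ x : H, g x = f x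

/-- `H ∈ W(G)`: every endomorphism of `H` extends to an endomorphism of `G`. -/
def InW {G : Type*} [AddCommGroup G] (H : AddSubgroup G) : Prop :=
  ∀ f : H →+ H, ∃ g : G →+ G, ∀ x : H, g x = (f x : G)

/-- `K` is an internal direct sum of cyclic subgroups. -/
def IsDirectSumOfCyclics {G : Type*} [AddCommGroup G] (K : AddSubgroup G) : Prop :=
  ∃ (ι : Type) (a : ι → G), (∀ i, a i ∈ K) ∧ (⨆ i, zmultiples (a i)) = K ∧
    iSupIndep (fun i => zmultiples (a i))

/-- `K` is a `p`-pure subgroup: `pⁿG ∩ K = pⁿK`. -/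
def IsPure (p : ℕ) {G : Type*} [AddCommGroup G] (K : AddSubgroup G) : Prop :=
  ∀ n : ℕ, ∀ x ∈ K, (∃ y : G, p ^ n • y = x) → ∃ z ∈ K, p ^ n • z = x

/-- The quotient `G/K` is divisible (equivalently `G = K + pG`). -/
def QuotDivisible (p : ℕ) {G : Type*} [AddCommGroup G] (K : AddSubgroup G) : Prop :=
  ∀ x : G, ∃ y : G, x - p • y ∈ K

/-- The Ulm sequence of `x` has a gap before index `k` (with `h₋₁ = -1`). -/
def HasGapBefore (p : ℕ) {G : Type*} [AddCommGroup G] (x : G) (k : ℕ) : Prop :=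
  if k = 0 then 0 < pHeight p x
  else pHeight p (p ^ (k - 1) • x) + 1 < pHeight p (p ^ k • x)


section Aux

variable {G : Type*} [AddCommGroup G]

lemma natCast_le_pHeight_iff (p m : ℕ) (x : G) :
    (m : ℕ∞) ≤ pHeight p x ↔ ∃ y : G, p ^ m • y = x := by
  constructor
  · intro h
    by_contra hc
    push_neg at hc
    have hub : pHeight p x ≤ ((m - 1 : ℕ) : ℕ∞) := by
      apply sSup_le
      rintro s ⟨m', rfl, y, hy⟩
      rcases lt_or_ge m' m with h' | h'
      · exact_mod_cast Nat.le_sub_one_of_lt h'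
      · exact absurd (show p ^ m • (p ^ (m' - m) • y) = x by
          rw [smul_smul, ← pow_add, Nat.add_sub_cancel' h', hy]) (hc _)
    rcases Nat.eq_zero_or_pos m with rfl | hm
    · exact hc x (by simp)
    · have h2 := h.trans hub
      have h3 : m ≤ m - 1 := by exact_mod_cast h2
      omega
  · rintro ⟨y, hy⟩
    exact le_sSup ⟨m, rfl, y, hy⟩

lemma pHeight_le_map (p : ℕ) (g : G →+ G) (x : G) : pHeight p x ≤ pHeight p (g x) := by
  apply sSup_le
  rintro s ⟨m, rfl, y, hy⟩
  exact le_sSup ⟨m, rfl, g y, by rw [← map_nsmul, hy]⟩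

lemma pHeight_neg (p : ℕ) (x : G) : pHeight p (-x) = pHeight p x := by
  have h := fun z : G => pHeight_le_map p (-(AddMonoidHom.id G)) z
  simp only [AddMonoidHom.neg_apply, AddMonoidHom.id_apply] at h
  exact le_antisymm (by simpa using h (-x)) (h x)

lemma enat_le_of_forall {a b : ℕ∞} (h : ∀ n : ℕ, (n : ℕ∞) ≤ a → (n : ℕ∞) ≤ b) : a ≤ b := by
  cases a with
  | top =>
    cases b with
    | top => exact le_rfl
    | coe m =>
      have := h (m + 1) le_top
      have : m + 1 ≤ m := by exact_mod_cast this
      omega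
  | coe n => exact h n le_rfl

lemma min_pHeight_le_add (p : ℕ) (a b : G) :
    min (pHeight p a) (pHeight p b) ≤ pHeight p (a + b) := by
  apply enat_le_of_forall
  intro n hn
  obtain ⟨y, hy⟩ := (natCast_le_pHeight_iff p n a).1 (hn.trans (min_le_left _ _))
  obtain ⟨z, hz⟩ := (natCast_le_pHeight_iff p n b).1 (hn.trans (min_le_right _ _))
  exact (natCast_le_pHeight_iff p n (a + b)).2 ⟨y + z, by rw [smul_add, hy, hz]⟩

end Aux

theorem stmt9 {G : Type*} [AddCommGroup G] (p : ℕ) (hp : p.Prime) (hG : IsPGrp p G)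
    (K L : AddSubgroup G) (hKL : Disjoint K L) (hW : InW (K ⊔ L)) :
    ∀ k ∈ K, ∀ l ∈ L, pHeight p (k + l) = min (pHeight p k) (pHeight p l) := by
  classical
  intro k hk l hl
  -- the addition map K × L →+ K ⊔ L
  let φ : K × L →+ ↥(K ⊔ L) :=
    { toFun := fun q => ⟨(q.1 : G) + (q.2 : G),
        add_mem (mem_sup_left q.1.2) (mem_sup_right q.2.2)⟩
      map_zero' := by ext; simp
      map_add' := by intro a b; ext; simp [Prod.fst_add, Prod.snd_add]; abel }
  have hφ : ∀ q : K × L, (φ q : G) = (q.1 : G) + (q.2 : G) := fun q => rfl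
  have hinj : Function.Injective φ := by
    intro a b hab
    have h1 : (a.1 : G) + (a.2 : G) = (b.1 : G) + (b.2 : G) := by
      have := congrArg (fun z : ↥(K ⊔ L) => (z : G)) hab
      simpa [hφ] using this
    have h2 : (a.1 : G) - (b.1 : G) = (b.2 : G) - (a.2 : G) := by
      rw [sub_eq_sub_iff_add_eq_add, h1, add_comm]
    have hmemK : (a.1 : G) - (b.1 : G) ∈ K := sub_mem a.1.2 b.1.2
    have hmemL : (a.1 : G) - (b.1 : G) ∈ L := h2 ▸ sub_mem b.2.2 a.2.2
    have hz : (a.1 : G) - (b.1 : G) = 0 := by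
      have := hKL.le_bot ⟨hmemK, hmemL⟩
      simpa using this
    have hz' : (a.2 : G) - (b.2 : G) = 0 := by
      have h5 : (b.2 : G) - (a.2 : G) = 0 := by rw [← h2, hz]
      rw [← neg_sub, h5, neg_zero]
    ext
    · exact sub_eq_zero.1 hz
    · exact sub_eq_zero.1 hz'
  have hsurj : Function.Surjective φ := by
    rintro ⟨x, hx⟩
    rcases (AddSubgroup.mem_sup).1 hx with ⟨y, hy, z, hz, hyz⟩
    exact ⟨⟨⟨y, hy⟩, ⟨z, hz⟩⟩, by ext; simpa [hφ] using hyz⟩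
  let e : (K × L) ≃+ ↥(K ⊔ L) := AddEquiv.ofBijective φ ⟨hinj, hsurj⟩
  -- the projection onto the K-component, as an endomorphism of K ⊔ L
  let π : ↥(K ⊔ L) →+ ↥(K ⊔ L) :=
    ((AddSubgroup.inclusion (le_sup_left : K ≤ K ⊔ L)).comp
      (AddMonoidHom.fst K L)).comp e.symm.toAddMonoidHom
  obtain ⟨g, hg⟩ := hW π
  -- g (k + l) = k
  set x : ↥(K ⊔ L) := ⟨k + l, add_mem (mem_sup_left hk) (mem_sup_right hl)⟩ with hxdef
  have hex : e ⟨⟨k, hk⟩, ⟨l, hl⟩⟩ = x := by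
    ext; rfl
  have hgx : g (k + l) = k := by
    have h1 : g ((x : G)) = ((π x : ↥(K ⊔ L)) : G) := hg x
    have h2 : e.symm x = ⟨⟨k, hk⟩, ⟨l, hl⟩⟩ := by
      rw [← hex, AddEquiv.symm_apply_apply]
    have h3 : ((π x : ↥(K ⊔ L)) : G) = k := by
      simp [π, h2, AddSubgroup.inclusion]
    rw [h3] at h1; simpa [hxdef] using h1
  -- height inequalities
  have hk' : pHeight p (k + l) ≤ pHeight p k := by
    have := pHeight_le_map p g (k + l)
    rwa [hgx] at this
  have hl' : pHeight p (k + l) ≤ pHeight p l := by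
    have h4 := min_pHeight_le_add p (-k) (k + l)
    rw [pHeight_neg, neg_add_cancel_left] at h4
    exact le_trans (le_min hk' le_rfl) h4
  exact le_antisymm (le_min hk' hl') (min_pHeight_le_add p k l)
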